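/- Let f : X → Y be a continuous map from a topological space X to a Hausdorff space Y, and let κ be an infinite cardinal with l(X) ≤ κ and ψ(Y) ≤ κ. If |f(X)| > κ, then the set of points y ∈ f(X) such that every open neighborhood V of y in Y satisfies |V ∩ f(X)| > κ is infinite. -/

import Mathlib

open Cardinal Set Topology

universe u

def FunctionallyHausdorff (X : Type u) [TopologicalSpace X] : Prop :=
  ∀ x y : X, x ≠ y → ∃ f : X → unitInterval, Continuous f ∧ f x = 0 ∧ f y = 1

def IsCechComplete (X : Type u) [TopologicalSpace X] : Prop :=
  ∃ (K : Type u) (_ : TopologicalSpace K) (e : X → K),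
    CompactSpace K ∧ T2Space K ∧ IsEmbedding e ∧ DenseRange e ∧ IsGδ (Set.range e)

noncomputable def lindelofNumber (X : Type u) [TopologicalSpace X] : Cardinal.{u} :=
  sInf {κ : Cardinal.{u} | ℵ₀ ≤ κ ∧ ∀ U : Set (Set X), (∀ u ∈ U, IsOpen u) → ⋃₀ U = Set.univ →
    ∃ V ⊆ U, #↥V ≤ κ ∧ ⋃₀ V = Set.univ}

noncomputable def pseudocharacter (X : Type u) [TopologicalSpace X] : Cardinal.{u} :=
  sInf {κ : Cardinal.{u} | ℵ₀ ≤ κ ∧ ∀ x : X, ∃ 𝒰 : Set (Set X),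
    #↥𝒰 ≤ κ ∧ (∀ U ∈ 𝒰, IsOpen U ∧ x ∈ U) ∧ ⋂₀ 𝒰 = ⋂₀ {U : Set X | IsOpen U ∧ x ∈ U}}

def IsScatteredSet {X : Type u} [TopologicalSpace X] (S : Set X) : Prop :=
  ∀ T ⊆ S, T.Nonempty → ∃ x ∈ T, ∃ U : Set X, IsOpen U ∧ U ∩ T = {x}

def IsKAnalytic (X : Type u) [TopologicalSpace X] : Prop :=
  ∃ (P : Type u) (_ : TopologicalSpace P) (f : P → X),
    LindelofSpace P ∧ IsCechComplete P ∧ Continuous f ∧ Function.Surjective f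

def IsAnalyticSpace (X : Type u) [TopologicalSpace X] : Prop :=
  ∃ (P : Type u) (_ : TopologicalSpace P), PolishSpace P ∧
    ∃ f : P → X, Continuous f ∧ Function.Surjective f

noncomputable def boundingNumber : Cardinal.{0} :=
  sInf {κ : Cardinal.{0} | ∃ B : Set (ℕ → ℕ), #↥B = κ ∧
    ∀ y : ℕ → ℕ, ∃ x ∈ B, {n : ℕ | ¬ x n ≤ y n}.Infinite}

lemma lindelof_extract {X : Type u} [TopologicalSpace X] {κ : Cardinal.{u}}
    (h : lindelofNumber X ≤ κ) :
    ∀ U : Set (Set X), (∀ u ∈ U, IsOpen u) → ⋃₀ U = Set.univ →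
      ∃ V ⊆ U, #↥V ≤ κ ∧ ⋃₀ V = Set.univ := by
  have hne : {κ' : Cardinal.{u} | ℵ₀ ≤ κ' ∧ ∀ U : Set (Set X), (∀ u ∈ U, IsOpen u) →
      ⋃₀ U = Set.univ → ∃ V ⊆ U, #↥V ≤ κ' ∧ ⋃₀ V = Set.univ}.Nonempty := by
    refine ⟨max ℵ₀ #(Set X), le_max_left _ _, fun U hU hcov => ⟨U, Subset.rfl, ?_, hcov⟩⟩
    exact le_trans (Cardinal.mk_set_le U) (le_max_right _ _)
  have hmem := csInf_mem hne
  intro U hU hcov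
  obtain ⟨V, hVU, hVc, hVcov⟩ := hmem.2 U hU hcov
  exact ⟨V, hVU, hVc.trans h, hVcov⟩

lemma pseudochar_extract {Y : Type u} [TopologicalSpace Y] {κ : Cardinal.{u}}
    (h : pseudocharacter Y ≤ κ) :
    ∀ y : Y, ∃ 𝒰 : Set (Set Y), #↥𝒰 ≤ κ ∧ (∀ U ∈ 𝒰, IsOpen U ∧ y ∈ U) ∧
      ⋂₀ 𝒰 = ⋂₀ {U : Set Y | IsOpen U ∧ y ∈ U} := by
  have hne : {κ' : Cardinal.{u} | ℵ₀ ≤ κ' ∧ ∀ y : Y, ∃ 𝒰 : Set (Set Y),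
      #↥𝒰 ≤ κ' ∧ (∀ U ∈ 𝒰, IsOpen U ∧ y ∈ U) ∧
      ⋂₀ 𝒰 = ⋂₀ {U : Set Y | IsOpen U ∧ y ∈ U}}.Nonempty := by
    refine ⟨max ℵ₀ #(Set Y), le_max_left _ _, fun y =>
      ⟨{U : Set Y | IsOpen U ∧ y ∈ U}, le_trans (Cardinal.mk_set_le _) (le_max_right _ _),
        fun U hU => hU, rfl⟩⟩
  have hmem := csInf_mem hne
  intro y
  obtain ⟨𝒰, h1, h2, h3⟩ := hmem.2 y
  exact ⟨𝒰, h1.trans h, h2, h3⟩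

lemma t1_sInter_nhds {Y : Type u} [TopologicalSpace Y] [T1Space Y] (y : Y) :
    ⋂₀ {U : Set Y | IsOpen U ∧ y ∈ U} = {y} := by
  apply Subset.antisymm
  · intro z hz
    by_contra hzy
    obtain ⟨U, hU, hyU, hzU⟩ := t1Space_iff_exists_open.mp ‹T1Space Y› (Ne.symm hzy)
    exact hzU (hz U ⟨hU, hyU⟩)
  · rintro z rfl U ⟨hU, hyU⟩
    exact hyU

theorem stmt19 {X Y : Type u} [TopologicalSpace X] [TopologicalSpace Y] [T2Space Y]
    (f : X → Y) (hf : Continuous f) (κ : Cardinal.{u}) (hκ : ℵ₀ ≤ κ)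
    (hl : lindelofNumber X ≤ κ) (hψ : pseudocharacter Y ≤ κ)
    (hcard : κ < #↥(Set.range f)) :
    {y ∈ Set.range f | ∀ V : Set Y, IsOpen V → y ∈ V →
      κ < #↥(V ∩ Set.range f)}.Infinite := by
  classical
  set A : Set Y := Set.range f with hA
  set S : Set Y := {y ∈ A | ∀ V : Set Y, IsOpen V → y ∈ V → κ < #↥(V ∩ A)} with hSdef
  intro hfin
  -- light-point neighborhoods
  have hlight : ∀ z : Y, ∃ W : Set Y, z ∈ A \ S →
      IsOpen W ∧ z ∈ W ∧ #↥(W ∩ A) ≤ κ := by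
    intro z
    by_cases hz : z ∈ A \ S
    · have hz2 : ¬ (∀ V : Set Y, IsOpen V → z ∈ V → κ < #↥(V ∩ A)) := by
        intro h; exact hz.2 ⟨hz.1, h⟩
      push_neg at hz2
      obtain ⟨V, hV1, hV2, hV3⟩ := hz2
      exact ⟨V, fun _ => ⟨hV1, hV2, hV3⟩⟩
    · exact ⟨∅, fun h => absurd h hz⟩
  choose V hV using hlight
  -- pseudocharacter families, augmented with univ to be nonempty
  obtain ⟨𝒰₀, h𝒰₀⟩ := Classical.axiom_of_choice (pseudochar_extract hψ)
  set 𝒰 : Y → Set (Set Y) := fun y => insert Set.univ (𝒰₀ y) with h𝒰def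
  have h𝒰card : ∀ y, #↥(𝒰 y) ≤ κ := by
    intro y
    calc #↥(𝒰 y) ≤ #↥(𝒰₀ y) + 1 := Cardinal.mk_insert_le
    _ ≤ κ + κ := add_le_add (h𝒰₀ y).1 (le_trans (le_of_lt Cardinal.one_lt_aleph0) hκ)
    _ = κ := Cardinal.add_eq_self hκ
  have h𝒰mem : ∀ y, ∀ U ∈ 𝒰 y, IsOpen U ∧ y ∈ U := by
    intro y U hU
    rcases hU with rfl | hU
    · exact ⟨isOpen_univ, mem_univ y⟩
    · exact (h𝒰₀ y).2.1 U hU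
  have h𝒰int : ∀ y, ⋂₀ 𝒰 y = {y} := by
    intro y
    rw [h𝒰def]
    simp only [sInter_insert, univ_inter]
    rw [(h𝒰₀ y).2.2, t1_sInter_nhds]
  have h𝒰ne : ∀ y, (𝒰 y).Nonempty := fun y => ⟨Set.univ, mem_insert _ _⟩
  -- key covering lemma
  have key : ∀ g : Y → Set Y, (∀ y ∈ S, IsOpen (g y) ∧ y ∈ g y) →
      #↥(A \ ⋃ y ∈ S, g y) ≤ κ := by
    intro g hg
    set 𝒞 : Set (Set X) := ((fun z => f ⁻¹' (V z)) '' (A \ S)) ∪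
      ((fun y => f ⁻¹' (g y)) '' S) with h𝒞
    have h𝒞open : ∀ u ∈ 𝒞, IsOpen u := by
      rintro u (⟨z, hz, rfl⟩ | ⟨y, hy, rfl⟩)
      · exact (hV z hz).1.preimage hf
      · exact (hg y hy).1.preimage hf
    have h𝒞cov : ⋃₀ 𝒞 = Set.univ := by
      apply eq_univ_of_forall
      intro x
      by_cases hx : f x ∈ S
      · exact ⟨f ⁻¹' (g (f x)), Or.inr ⟨f x, hx, rfl⟩, (hg (f x) hx).2⟩
      · have hxa : f x ∈ A \ S := ⟨⟨x, rfl⟩, hx⟩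
        exact ⟨f ⁻¹' (V (f x)), Or.inl ⟨f x, hxa, rfl⟩, (hV (f x) hxa).2.1⟩
    obtain ⟨𝒟, h𝒟sub, h𝒟card, h𝒟cov⟩ := lindelof_extract hl 𝒞 h𝒞open h𝒞cov
    -- assign to each member of 𝒟 a small trace on A
    set W : Set X → Set Y := fun D =>
      if hd : ∃ z ∈ A \ S, D = f ⁻¹' (V z) then V hd.choose ∩ A else ∅ with hW
    have hWsmall : ∀ D : Set X, #↥(W D) ≤ κ := by
      intro D
      rw [hW]
      by_cases hd : ∃ z ∈ A \ S, D = f ⁻¹' (V z)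
      · simp only [dif_pos hd]
        exact (hV hd.choose hd.choose_spec.1).2.2
      · simp only [dif_neg hd, Cardinal.mk_emptyCollection]
        exact zero_le
    have hsub : A \ (⋃ y ∈ S, g y) ⊆ ⋃ D : ↥𝒟, W ↑D := by
      rintro a ⟨haA, haG⟩
      obtain ⟨x, rfl⟩ := haA
      have hx : x ∈ ⋃₀ 𝒟 := h𝒟cov ▸ mem_univ x
      obtain ⟨D, hD𝒟, hxD⟩ := hx
      rcases h𝒟sub hD𝒟 with ⟨z, hz, rfl⟩ | ⟨y, hy, rfl⟩
      · have hd : ∃ z' ∈ A \ S, f ⁻¹' (V z) = f ⁻¹' (V z') := ⟨z, hz, rfl⟩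
        refine mem_iUnion.2 ⟨⟨_, hD𝒟⟩, ?_⟩
        rw [hW]
        simp only [dif_pos hd]
        have hspec := hd.choose_spec
        have : x ∈ f ⁻¹' (V hd.choose) := hspec.2 ▸ hxD
        exact ⟨this, ⟨x, rfl⟩⟩
      · exact absurd (mem_biUnion hy hxD) haG
    calc #↥(A \ ⋃ y ∈ S, g y) ≤ #↥(⋃ D : ↥𝒟, W ↑D) := Cardinal.mk_le_mk_of_subset hsub
      _ ≤ #↥𝒟 * ⨆ D : ↥𝒟, #↥(W ↑D) := Cardinal.mk_iUnion_le _
      _ ≤ κ * κ := mul_le_mul' h𝒟card (ciSup_le' fun D => hWsmall ↑D)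
      _ = κ := Cardinal.mul_eq_self hκ
  -- now suppose S is finite
  haveI hfint : Fintype ↥S := hfin.fintype
  -- choice functions
  set Φ : Type u := Π y : ↥S, ↥(𝒰 ↑y) with hΦ
  have hΦcard : #Φ ≤ κ := by
    calc #Φ = Cardinal.prod (fun y : ↥S => #↥(𝒰 ↑y)) := Cardinal.mk_pi _
      _ ≤ Cardinal.prod (fun _ : ↥S => κ) := Cardinal.prod_le_prod _ _ (fun y => h𝒰card ↑y)
      _ = κ ^ #↥S := Cardinal.prod_const' _ _
      _ = κ ^ (Fintype.card ↥S : ℕ) := by rw [Cardinal.mk_fintype]; norm_cast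
      _ ≤ κ := Cardinal.power_nat_le hκ
  -- from a choice function build g
  set G : Φ → Y → Set Y := fun φ y => if h : y ∈ S then (↑(φ ⟨y, h⟩) : Set Y) else Set.univ
    with hG
  have hGprop : ∀ φ : Φ, ∀ y ∈ S, IsOpen (G φ y) ∧ y ∈ G φ y := by
    intro φ y hy
    rw [hG]
    simp only [dif_pos hy]
    exact h𝒰mem y ↑(φ ⟨y, hy⟩) (φ ⟨y, hy⟩).2
  have hcover : A ⊆ S ∪ ⋃ φ : Φ, (A \ ⋃ y ∈ S, G φ y) := by
    intro a ha
    by_cases haS : a ∈ S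
    · exact Or.inl haS
    · have hchoose : ∀ y : ↥S, ∃ U : ↥(𝒰 ↑y), a ∉ (↑U : Set Y) := by
        intro y
        by_contra hcon
        push_neg at hcon
        have : a ∈ ⋂₀ 𝒰 ↑y := fun U hU => hcon ⟨U, hU⟩
        rw [h𝒰int] at this
        rw [this] at haS
        exact haS y.2
      choose φ hφ using hchoose
      refine Or.inr (mem_iUnion.2 ⟨φ, ha, ?_⟩)
      intro hmem
      obtain ⟨y, hy, hay⟩ := mem_iUnion₂.mp hmem
      rw [hG] at hay
      simp only [dif_pos hy] at hay
      exact hφ ⟨y, hy⟩ hay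
  have hAcard : #↥A ≤ κ := by
    calc #↥A ≤ #↥(S ∪ ⋃ φ : Φ, (A \ ⋃ y ∈ S, G φ y)) := Cardinal.mk_le_mk_of_subset hcover
      _ ≤ #↥S + #↥(⋃ φ : Φ, (A \ ⋃ y ∈ S, G φ y)) := Cardinal.mk_union_le _ _
      _ ≤ κ + #Φ * ⨆ φ : Φ, #↥(A \ ⋃ y ∈ S, G φ y) := by
          refine add_le_add ?_ (Cardinal.mk_iUnion_le _)
          exact le_trans (le_of_lt (Cardinal.lt_aleph0_of_finite ↥S)) hκ
      _ ≤ κ + κ * κ := by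
          refine add_le_add le_rfl (mul_le_mul' hΦcard (ciSup_le' fun φ => key (G φ) (hGprop φ)))
      _ = κ := by rw [Cardinal.mul_eq_self hκ, Cardinal.add_eq_self hκ]
  exact absurd hcard (not_lt.2 hAcard)
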